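/- arXiv:math/0610483 — 2 statements merged into one kernel-verified Lean document; each statement's English description precedes it below -/
import Mathlib

section
/- Let F be a field of characteristic ≠ 2. Suppose A, B ∈ M₂(F) are invertible, A − 1 is invertible, AB ≠ BA, and A, B satisfy the fundamental equation. Then either (tr(A) = det(A) and tr(AB⁻¹) = 0), or det(a×b) = 0, where a and b are the traceless parts of A and B respectively. -/
open Matrix

/-- The traceless part of a 2×2 matrix. -/
noncomputable def tracelessPart {F : Type*} [Field F] (A : Matrix (Fin 2) (Fin 2) F) :
    Matrix (Fin 2) (Fin 2) F :=
  A - ((2 : F)⁻¹ * A.trace) • (1 : Matrix (Fin 2) (Fin 2) F)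

/-- The cross product of traceless 2×2 matrices: `a×b = (ab - ba)/2`. -/
noncomputable def matCross {F : Type*} [Field F] (a b : Matrix (Fin 2) (Fin 2) F) :
    Matrix (Fin 2) (Fin 2) F :=
  (2 : F)⁻¹ • (a * b - b * a)

set_option maxHeartbeats 4000000 in
set_option maxRecDepth 8000 in
/-- For non-commuting invertible 2×2 matrix solutions `A, B` of the
fundamental equation (with `A - 1` invertible), either `tr A = det A` and
`tr (A B⁻¹) = 0`, or `det (a × b) = 0` where `a, b` are the traceless parts. -/
theorem stmt1 {F : Type*} [Field F] (h2 : (2 : F) ≠ 0)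
    (A B : Matrix (Fin 2) (Fin 2) F)
    (hA : IsUnit A) (hB : IsUnit B) (hA1 : IsUnit (A - 1))
    (hnc : A * B ≠ B * A)
    (hfund : A⁻¹ * B⁻¹ * A * B - B⁻¹ * A * B = B * A⁻¹ * B⁻¹ * A - A) :
    (A.trace = A.det ∧ (A * B⁻¹).trace = 0) ∨
      (matCross (tracelessPart A) (tracelessPart B)).det = 0 := by
  have hdA : A.det ≠ 0 := by
    have := hA.map (Matrix.detMonoidHom); simpa [isUnit_iff_ne_zero] using this
  have hdB : B.det ≠ 0 := by
    have := hB.map (Matrix.detMonoidHom); simpa [isUnit_iff_ne_zero] using this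
  have hadjA : A.det • A⁻¹ = A.trace • (1 : Matrix (Fin 2) (Fin 2) F) - A := by
    rw [Matrix.inv_def, Ring.inverse_eq_inv', smul_smul, mul_inv_cancel₀ hdA, one_smul,
      Matrix.adjugate_fin_two]
    ext i j
    fin_cases i <;> fin_cases j <;> simp [Matrix.trace_fin_two, Matrix.one_apply]
  have hadjB : B.det • B⁻¹ = B.trace • (1 : Matrix (Fin 2) (Fin 2) F) - B := by
    rw [Matrix.inv_def, Ring.inverse_eq_inv', smul_smul, mul_inv_cancel₀ hdB, one_smul,
      Matrix.adjugate_fin_two]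
    ext i j
    fin_cases i <;> fin_cases j <;> simp [Matrix.trace_fin_two, Matrix.one_apply]
  have hBB : B * B⁻¹ = 1 := mul_nonsing_inv B (by
    simpa [Matrix.isUnit_iff_isUnit_det, isUnit_iff_ne_zero] using hdB)
  have hE : ((A.trace • (1 : Matrix (Fin 2) (Fin 2) F) - A) - A.det • 1) *
        ((B.trace • (1 : Matrix (Fin 2) (Fin 2) F) - B) * (A * B)) -
      B * (((A.trace • (1 : Matrix (Fin 2) (Fin 2) F) - A) - A.det • 1) *
        ((B.trace • (1 : Matrix (Fin 2) (Fin 2) F) - B) * A)) = 0 := by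
    rw [← hadjA, ← hadjB]
    have key : (A⁻¹ - 1) * B⁻¹ * (A * B) - B * ((A⁻¹ - 1) * (B⁻¹ * A)) = 0 := by
      have h1 : (A⁻¹ - 1) * B⁻¹ * (A * B) - B * ((A⁻¹ - 1) * (B⁻¹ * A))
          = (A⁻¹ * B⁻¹ * A * B - B⁻¹ * A * B) - (B * A⁻¹ * B⁻¹ * A - (B * B⁻¹) * A) := by
        noncomm_ring
      rw [h1, hBB, one_mul, hfund, sub_self]
    have expand : ((A.det • A⁻¹) - A.det • 1) * ((B.det • B⁻¹) * (A * B)) -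
        B * (((A.det • A⁻¹) - A.det • 1) * ((B.det • B⁻¹) * A))
        = (A.det * B.det) • ((A⁻¹ - 1) * B⁻¹ * (A * B) - B * ((A⁻¹ - 1) * (B⁻¹ * A))) := by
      simp only [smul_sub, sub_mul, mul_sub, smul_mul_assoc, mul_smul_comm, smul_smul,
        one_mul, mul_one]
      simp only [← mul_assoc]
      module
    rw [expand, key, smul_zero]
  -- entry equations of E = 0
  have e00 := congrFun (congrFun hE 0) 0
  have e01 := congrFun (congrFun hE 0) 1
  have e10 := congrFun (congrFun hE 1) 0
  have e11 := congrFun (congrFun hE 1) 1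
  simp only [Matrix.one_fin_two, Matrix.of_apply, Matrix.sub_apply, Matrix.smul_apply,
    Matrix.mul_apply, Fin.sum_univ_two, Matrix.trace_fin_two, Matrix.det_fin_two, smul_eq_mul,
    Matrix.cons_val', Matrix.cons_val_zero, Matrix.cons_val_one, Matrix.head_cons,
    Matrix.empty_val', Matrix.cons_val_fin_one, Matrix.head_fin_const,
    Matrix.zero_apply] at e00 e01 e10 e11
  -- step 1 : (trA - detA) * det(AB - BA) = 0
  have step1 : (A.trace - A.det) * (A * B - B * A).det = 0 := by
    rw [Matrix.det_fin_two, Matrix.trace_fin_two, Matrix.det_fin_two]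
    simp only [Matrix.sub_apply, Matrix.mul_apply, Fin.sum_univ_two]
    linear_combination (A 0 0) * e00 + (A 1 0) * e01 + (A 0 1) * e10 + (A 1 1) * e11
  by_cases hC : (A * B - B * A).det = 0
  · right
    have hcross : matCross (tracelessPart A) (tracelessPart B)
        = (2:F)⁻¹ • (A * B - B * A) := by
      unfold matCross tracelessPart
      congr 1
      ext i j
      fin_cases i <;> fin_cases j <;>
        simp [Matrix.mul_apply, Fin.sum_univ_two, Matrix.trace_fin_two, Matrix.one_apply] <;>
        ring
    rw [hcross, Matrix.det_smul, hC, mul_zero]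
  · left
    have htr : A.trace = A.det := by
      rcases mul_eq_zero.mp step1 with h | h
      · exact sub_eq_zero.mp h
      · exact absurd h hC
    refine ⟨htr, ?_⟩
    rw [Matrix.trace_fin_two, Matrix.det_fin_two] at htr
    -- gamma
    have hg : 2*(A 0 0 * B 0 0 + A 0 1 * B 1 0 + A 1 0 * B 0 1 + A 1 1 * B 1 1)
        - (A 0 0 + A 1 1)*(B 0 0 + B 1 1)
        - (B 0 0 + B 1 1)*(A 0 0 * A 1 1 - A 0 1 * A 1 0) = 0 := by
      by_contra hg
      apply hC
      have c00 : A 0 0 * B 0 0 + A 0 1 * B 1 0 - (B 0 0 * A 0 0 + B 0 1 * A 1 0) = 0 := by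
        have h' : (2*(2*(A 0 0 * B 0 0 + A 0 1 * B 1 0 + A 1 0 * B 0 1 + A 1 1 * B 1 1)
            - (A 0 0 + A 1 1)*(B 0 0 + B 1 1)
            - (B 0 0 + B 1 1)*(A 0 0 * A 1 1 - A 0 1 * A 1 0))) *
            (A 0 0 * B 0 0 + A 0 1 * B 1 0 - (B 0 0 * A 0 0 + B 0 1 * A 1 0)) = 0 := by
          linear_combination 4*e00 +
            ((4*(B 0 0 * B 1 1 - B 0 1 * B 1 0) - (B 0 0 + B 1 1)^2)*(2*(A 0 0) - (A 0 0 + A 1 1)) +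
             (2*(A 0 0 * B 0 0 + A 0 1 * B 1 0 + A 1 0 * B 0 1 + A 1 1 * B 1 1)
               - (A 0 0 + A 1 1)*(B 0 0 + B 1 1))*(2*(B 0 0) - (B 0 0 + B 1 1))) * htr
        exact (mul_eq_zero.mp h').resolve_left (mul_ne_zero h2 hg)
      have c10 : A 1 0 * B 0 0 + A 1 1 * B 1 0 - (B 1 0 * A 0 0 + B 1 1 * A 1 0) = 0 := by
        have h' : (2*(2*(A 0 0 * B 0 0 + A 0 1 * B 1 0 + A 1 0 * B 0 1 + A 1 1 * B 1 1)
            - (A 0 0 + A 1 1)*(B 0 0 + B 1 1)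
            - (B 0 0 + B 1 1)*(A 0 0 * A 1 1 - A 0 1 * A 1 0))) *
            (A 1 0 * B 0 0 + A 1 1 * B 1 0 - (B 1 0 * A 0 0 + B 1 1 * A 1 0)) = 0 := by
          linear_combination 4*e10 +
            ((4*(B 0 0 * B 1 1 - B 0 1 * B 1 0) - (B 0 0 + B 1 1)^2)*(2*(A 1 0)) +
             (2*(A 0 0 * B 0 0 + A 0 1 * B 1 0 + A 1 0 * B 0 1 + A 1 1 * B 1 1)
               - (A 0 0 + A 1 1)*(B 0 0 + B 1 1))*(2*(B 1 0))) * htr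
        exact (mul_eq_zero.mp h').resolve_left (mul_ne_zero h2 hg)
      rw [Matrix.det_fin_two]
      simp only [Matrix.sub_apply, Matrix.mul_apply, Fin.sum_univ_two]
      linear_combination (A 1 0 * B 0 1 + A 1 1 * B 1 1 - (B 1 0 * A 0 1 + B 1 1 * A 1 1)) * c00
        - (A 0 0 * B 0 1 + A 0 1 * B 1 1 - (B 0 0 * A 0 1 + B 0 1 * A 1 1)) * c10
    -- conclude trace(A B⁻¹) = 0
    have hdB' : B 0 0 * B 1 1 - B 0 1 * B 1 0 ≠ 0 := by
      rw [Matrix.det_fin_two] at hdB; exact hdB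
    rw [Matrix.inv_def, Ring.inverse_eq_inv', Matrix.adjugate_fin_two, Matrix.det_fin_two]
    rw [Matrix.trace_fin_two]
    simp only [Matrix.mul_apply, Matrix.smul_apply, Fin.sum_univ_two, smul_eq_mul, Matrix.of_apply,
      Matrix.cons_val', Matrix.cons_val_zero, Matrix.cons_val_one, Matrix.head_cons,
      Matrix.empty_val', Matrix.cons_val_fin_one, Matrix.head_fin_const]
    field_simp [hdB']
    apply mul_left_cancel₀ h2
    rw [mul_zero]
    linear_combination
      (B 0 0 + B 1 1) * htr
        - hg
end

section
/- Let F be a field of characteristic ≠ 2 in which every element has a square root. Then every traceless matrix a ∈ M₂(F) is group-conjugate to a matrix with zero diagonal: there exists an invertible C ∈ M₂(F) such that both diagonal entries of C⁻¹aC are 0. -/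
open Matrix

/-- over a field of characteristic ≠ 2 in which every element has
a square root, every traceless 2×2 matrix is group-conjugate to a matrix with
zero diagonal. -/
theorem stmt11 {F : Type*} [Field F] (h2 : (2 : F) ≠ 0)
    (hsq : ∀ x : F, ∃ y : F, y ^ 2 = x)
    (a : Matrix (Fin 2) (Fin 2) F) (ha : a.trace = 0) :
    ∃ C : Matrix (Fin 2) (Fin 2) F, IsUnit C ∧
      (C⁻¹ * a * C) 0 0 = 0 ∧ (C⁻¹ * a * C) 1 1 = 0 := by
  rw [Matrix.trace_fin_two] at ha
  have hs : a 1 1 = -a 0 0 := by linear_combination ha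
  by_cases hr : a 1 0 ≠ 0
  · refine ⟨!![1, a 0 0; 0, a 1 0], ?_, ?_, ?_⟩
    · rw [Matrix.isUnit_iff_isUnit_det]
      simp [Matrix.det_fin_two_of, hr]
    all_goals {
      have hinv : (!![1, a 0 0; 0, a 1 0] : Matrix (Fin 2) (Fin 2) F)⁻¹
          = !![1, -(a 0 0)/(a 1 0); 0, 1/(a 1 0)] := by
        apply Matrix.inv_eq_left_inv
        ext i j
        fin_cases i <;> fin_cases j <;>
          simp [Matrix.mul_apply, Fin.sum_univ_two] <;> field_simp <;> ring
      rw [hinv]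
      simp [Matrix.mul_apply, Matrix.vecMul, dotProduct, Fin.sum_univ_two, hs]
      field_simp
      ring }
  · push_neg at hr
    by_cases hq : a 0 1 ≠ 0
    · refine ⟨!![0, a 0 1; 1, -(a 0 0)], ?_, ?_, ?_⟩
      · rw [Matrix.isUnit_iff_isUnit_det]
        simp [Matrix.det_fin_two_of, hq]
      all_goals {
        have hinv : (!![0, a 0 1; 1, -(a 0 0)] : Matrix (Fin 2) (Fin 2) F)⁻¹
            = !![(a 0 0)/(a 0 1), 1; 1/(a 0 1), 0] := by
          apply Matrix.inv_eq_left_inv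
          ext i j
          fin_cases i <;> fin_cases j <;>
            simp [Matrix.mul_apply, Fin.sum_univ_two] <;> field_simp <;> ring
        rw [hinv]
        simp [Matrix.mul_apply, Matrix.vecMul, dotProduct, Fin.sum_univ_two, hs, hr]
        field_simp
        ring }
    · push_neg at hq
      refine ⟨!![1, 1; 1, -1], ?_, ?_, ?_⟩
      · rw [Matrix.isUnit_iff_isUnit_det]
        simp [Matrix.det_fin_two_of]
        intro h
        exact h2 (by linear_combination -h)
      all_goals {
        have hinv : (!![1, 1; 1, -1] : Matrix (Fin 2) (Fin 2) F)⁻¹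
            = !![1/2, 1/2; 1/2, -(1/2)] := by
          apply Matrix.inv_eq_left_inv
          ext i j
          fin_cases i <;> fin_cases j <;>
            simp [Matrix.mul_apply, Fin.sum_univ_two] <;> field_simp <;> ring
        rw [hinv]
        simp [Matrix.mul_apply, Matrix.vecMul, dotProduct, Fin.sum_univ_two, hs, hr, hq] }
end
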